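/- In the bicyclic monoid B, for k, j ≥ 0 and d, c ≥ 1, the inclusion T_{k,d} ⊆ T_{j,c} holds if and only if j ≤ k and c divides d. -/
import Mathlib


class InverseSemigroup (S : Type*) extends Semigroup S where
  inv : S → S
  mul_inv_mul : ∀ a : S, a * inv a * a = a
  inv_mul_inv : ∀ a : S, inv a * a * inv a = inv a
  inv_unique : ∀ a b : S, a * b * a = a → b * a * b = b → b = inv a

open InverseSemigroup

/-- `e` is an idempotent. -/
def IsIdem {S : Type*} [Mul S] (e : S) : Prop := e * e = e

/-- `r` is a left congruence: an equivalence relation compatible with left multiplication. -/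
def IsLeftCongruence {S : Type*} [Semigroup S] (r : S → S → Prop) : Prop :=
  Equivalence r ∧ ∀ a b c : S, r a b → r (c * a) (c * b)

/-- The inverse kernel of a relation: elements related to `a * a⁻¹`. -/
def InK {S : Type*} [InverseSemigroup S] (r : S → S → Prop) : Set S :=
  {a | r a (a * inv a)}

/-- The kernel: elements related to some idempotent. -/
def lker {S : Type*} [InverseSemigroup S] (r : S → S → Prop) : Set S :=
  {a | ∃ e, IsIdem e ∧ r a e}

/-- `τ` is a congruence on the semilattice of idempotents `E(S)`. -/
def IsECong {S : Type*} [InverseSemigroup S] (τ : S → S → Prop) : Prop :=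
  (∀ e f, τ e f → IsIdem e ∧ IsIdem f) ∧
  (∀ e, IsIdem e → τ e e) ∧
  (∀ e f, τ e f → τ f e) ∧
  (∀ e f g, τ e f → τ f g → τ e g) ∧
  (∀ e f g, IsIdem g → τ e f → τ (g * e) (g * f))

/-- The normaliser of a congruence on the idempotents. -/
def normaliser {S : Type*} [InverseSemigroup S] (τ : S → S → Prop) : Set S :=
  {a | ∀ e f, τ e f → τ (a * e * inv a) (a * f * inv a) ∧ τ (inv a * e * a) (inv a * f * a)}

/-- `T` is a full inverse subsemigroup of `S`. -/
def IsFullInverseSub {S : Type*} [InverseSemigroup S] (T : Set S) : Prop :=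
  (∀ e : S, IsIdem e → e ∈ T) ∧ (∀ a b, a ∈ T → b ∈ T → a * b ∈ T) ∧
  (∀ a, a ∈ T → inv a ∈ T)

/-- Multiplication of the bicyclic monoid on ℕ × ℕ. -/
def bmul (p q : ℕ × ℕ) : ℕ × ℕ :=
  (p.1 + (max p.2 q.1 - p.2), q.2 + (max p.2 q.1 - q.1))

/-- The subset `T_{k,d}` of the bicyclic monoid. -/
def Tkd (k d : ℕ) : Set (ℕ × ℕ) :=
  {p | k ≤ p.1 ∧ k ≤ p.2 ∧ (d : ℤ) ∣ ((p.1 : ℤ) - (p.2 : ℤ))}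

theorem stmt15 (k j d c : ℕ) (hd : 1 ≤ d) (hc : 1 ≤ c) :
    Tkd k d ⊆ Tkd j c ↔ (j ≤ k ∧ c ∣ d) := by
  constructor
  · intro h
    have h1 : (k, k) ∈ Tkd k d := ⟨le_refl k, le_refl k, by simp⟩
    have h2 : (k + d, k) ∈ Tkd k d := ⟨by omega, le_refl k, by push_cast; simp⟩
    have g1 := h h1
    have g2 := h h2
    refine ⟨g1.1, ?_⟩
    obtain ⟨-, -, hdvd⟩ := g2
    have : (c : ℤ) ∣ (d : ℤ) := by
      have : ((k + d : ℕ) : ℤ) - (k : ℤ) = (d : ℤ) := by push_cast; ring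
      rwa [this] at hdvd
    exact_mod_cast this
  · rintro ⟨hjk, hcd⟩ p ⟨h1, h2, h3⟩
    exact ⟨le_trans hjk h1, le_trans hjk h2, dvd_trans (Int.natCast_dvd_natCast.mpr hcd) h3⟩
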